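/- Let $b, c \in \mathbb{R}^n$ with $c_1 = 0$, $L_{i,j}=\delta_{i,j+1}$, $\Delta c = c - Lc$, and $D$ the upper-triangular matrix of ones ($D_{i,j} = [j \ge i]$). Then $\big(\Delta c \times (Db)\big)^T\Big(\tfrac12 (Lc)^{\times 2} + \tfrac12 (Lc)\times\Delta c + \tfrac16 \Delta c^{\times 2}\Big) = \tfrac16\, b^T c^{\times 3}$, where $\times$ denotes entrywise product. -/

import Mathlib

open Finset

lemma tel18 (f : ℕ → ℝ) (h0 : f 0 = 0) (m : ℕ) :
    ∑ k ∈ Finset.range (m+1), (f k - if k = 0 then 0 else f (k-1)) = f m := by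
  induction m with
  | zero => simp [h0]
  | succ m ih =>
    rw [Finset.sum_range_succ, ih]
    simp

theorem stmt18 (n : ℕ) (b c : Fin (n+1) → ℝ) (hc0 : c 0 = 0)
    (L D : Matrix (Fin (n+1)) (Fin (n+1)) ℝ)
    (hL : ∀ i j, L i j = if (i : ℕ) = (j : ℕ) + 1 then 1 else 0)
    (hD : ∀ i j, D i j = if i ≤ j then 1 else 0)
    (Δc : Fin (n+1) → ℝ) (hΔc : Δc = c - L.mulVec c) :
    ∑ i, (Δc i * (D.mulVec b) i) *
        ((1/2) * (L.mulVec c i)^2 + (1/2) * (L.mulVec c i) * Δc i + (1/6) * (Δc i)^2) =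
      (1/6) * ∑ i, b i * (c i)^3 := by
  have ha : ∀ i : Fin (n+1), L.mulVec c i =
      if h : (i:ℕ) = 0 then 0 else c ⟨(i:ℕ)-1, by omega⟩ := by
    intro i
    by_cases h : (i:ℕ) = 0
    · simp only [Matrix.mulVec, dotProduct, hL, dif_pos h]
      apply Finset.sum_eq_zero
      intro j _
      rw [if_neg (by omega), zero_mul]
    · rw [dif_neg h]
      simp only [Matrix.mulVec, dotProduct, hL]
      rw [Finset.sum_eq_single (⟨(i:ℕ)-1, by omega⟩ : Fin (n+1))]
      · rw [if_pos (show (i:ℕ) = ((⟨(i:ℕ)-1, by omega⟩ : Fin (n+1)) : ℕ) + 1 by simp; omega),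
          one_mul]
      · intro j _ hj
        rw [if_neg, zero_mul]
        intro hij
        apply hj
        apply Fin.ext
        simp
        omega
      · simp
  have key : ∀ i : Fin (n+1), (Δc i * (D.mulVec b) i) *
        ((1/2) * (L.mulVec c i)^2 + (1/2) * (L.mulVec c i) * Δc i + (1/6) * (Δc i)^2)
      = (D.mulVec b) i * ((1/6) * ((c i)^3 - (L.mulVec c i)^3)) := by
    intro i
    have : Δc i = c i - L.mulVec c i := by rw [hΔc]; simp
    rw [this]; ring
  rw [Finset.sum_congr rfl (fun i _ => key i)]
  have hDb : ∀ i : Fin (n+1), D.mulVec b i = ∑ j, if i ≤ j then b j else 0 := by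
    intro i
    simp only [Matrix.mulVec, dotProduct, hD]
    exact Finset.sum_congr rfl (fun j _ => by split_ifs <;> simp)
  simp only [hDb, Finset.sum_mul]
  rw [Finset.sum_comm]
  rw [Finset.mul_sum]
  apply Finset.sum_congr rfl
  intro j _
  have hsplit : ∑ i : Fin (n+1), (if i ≤ j then b j else 0) * ((1/6) * ((c i)^3 - (L.mulVec c i)^3))
      = b j * ((1/6) * ∑ i : Fin (n+1), (if i ≤ j then ((c i)^3 - (L.mulVec c i)^3) else 0)) := by
    rw [Finset.mul_sum, Finset.mul_sum]
    apply Finset.sum_congr rfl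
    intro i _
    split <;> ring
  rw [hsplit]
  have htel : ∑ i : Fin (n+1), (if i ≤ j then ((c i)^3 - (L.mulVec c i)^3) else 0) = (c j)^3 := by
    set G : ℕ → ℝ := fun k => if h : k < n+1 then (c ⟨k, h⟩)^3 else 0 with hG
    have hGf : ∀ i : Fin (n+1), (c i)^3 = G (i:ℕ) := by
      intro i; rw [hG]; simp; intro h; exact absurd i.isLt (by omega)
    have h1 : ∀ i : Fin (n+1), (L.mulVec c i)^3 = if (i:ℕ) = 0 then 0 else G ((i:ℕ)-1) := by
      intro i
      rw [ha i]
      by_cases h : (i:ℕ) = 0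
      · simp [h]
      · have hlt : (i:ℕ)-1 < n+1 := by omega
        simp [h, hG, hlt]
    have step : ∀ i : Fin (n+1), (if i ≤ j then ((c i)^3 - (L.mulVec c i)^3) else 0)
        = if (i:ℕ) ≤ (j:ℕ) then (G (i:ℕ) - if (i:ℕ) = 0 then 0 else G ((i:ℕ)-1)) else 0 := by
      intro i
      by_cases hij : i ≤ j
      · rw [if_pos hij, if_pos (Fin.le_def.mp hij), hGf i, h1 i]
      · rw [if_neg hij, if_neg (fun h => hij (Fin.le_def.mpr h))]
    rw [Finset.sum_congr rfl (fun i _ => step i)]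
    rw [Fin.sum_univ_eq_sum_range
      (fun k => if k ≤ (j:ℕ) then (G k - if k = 0 then 0 else G (k-1)) else 0)]
    rw [← Finset.sum_filter]
    have hfil : Finset.filter (fun k => k ≤ (j:ℕ)) (Finset.range (n+1))
        = Finset.range ((j:ℕ)+1) := by
      ext k; simp; omega
    rw [hfil]
    rw [tel18 G (by rw [hG]; simp [hc0]) (j:ℕ)]
    rw [hGf j]
  rw [htel]
  ring
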